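/- arXiv:1703.10696 — 4 statements merged into one kernel-verified Lean document; each statement's English description precedes it below -/
import Mathlib

section
/- Let E be a real inner product space and e, v ∈ E unit vectors with ⟨e,v⟩ = 0. Define γ_v : ℝ → E by γ_v(t) = (-tanh t)·e + (cosh t)⁻¹·v. Then: (i) γ_v is differentiable with γ_v'(t) = -(e - ⟨e,γ_v(t)⟩·γ_v(t)) for all t; (ii) ‖γ_v(t)‖ = 1 for all t; (iii) γ_v(t) → e as t → -∞ and γ_v(t) → -e as t → +∞. -/
open Filter
open scoped RealInnerProductSpace

private lemma cosh_ne (t : ℝ) : Real.cosh t ≠ 0 := (Real.cosh_pos t).ne'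

private lemma hasDerivAt_tanh' (t : ℝ) :
    HasDerivAt Real.tanh ((Real.cosh t)⁻¹ ^ 2) t := by
  have h : HasDerivAt (fun x => Real.sinh x / Real.cosh x)
      ((Real.cosh t * Real.cosh t - Real.sinh t * Real.sinh t) / Real.cosh t ^ 2) t :=
    (Real.hasDerivAt_sinh t).div (Real.hasDerivAt_cosh t) (cosh_ne t)
  have heq : (Real.cosh t * Real.cosh t - Real.sinh t * Real.sinh t) / Real.cosh t ^ 2
      = (Real.cosh t)⁻¹ ^ 2 := by
    have h2 := Real.cosh_sq_sub_sinh_sq t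
    have hc := cosh_ne t
    field_simp
    nlinarith [h2]
  rw [heq] at h
  exact h.congr_of_eventuallyEq (Eventually.of_forall fun x =>
    (Real.tanh_eq_sinh_div_cosh x))

private lemma hasDerivAt_sech (t : ℝ) :
    HasDerivAt (fun x => (Real.cosh x)⁻¹) (-Real.sinh t / Real.cosh t ^ 2) t :=
  (Real.hasDerivAt_cosh t).inv (cosh_ne t)

private lemma tendsto_cosh_atTop : Tendsto Real.cosh atTop atTop := by
  have h : Tendsto (fun x : ℝ => Real.exp x / 2) atTop atTop :=
    Real.tendsto_exp_atTop.atTop_div_const (by norm_num)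
  refine tendsto_atTop_mono (fun x => ?_) h
  rw [Real.cosh_eq]
  have := (Real.exp_pos (-x)).le
  linarith

private lemma tendsto_sech_atTop : Tendsto (fun t => (Real.cosh t)⁻¹) atTop (nhds 0) :=
  tendsto_cosh_atTop.inv_tendsto_atTop

private lemma tendsto_tanh_atTop : Tendsto Real.tanh atTop (nhds 1) := by
  have key : ∀ t : ℝ, Real.tanh t = 1 - Real.exp (-t) * (Real.cosh t)⁻¹ := by
    intro t
    have hc := cosh_ne t
    have hs : Real.cosh t - Real.exp (-t) = Real.sinh t := by
      rw [Real.sinh_eq, Real.cosh_eq]; ring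
    rw [Real.tanh_eq_sinh_div_cosh, ← hs]
    field_simp
  have h : Tendsto (fun t : ℝ => Real.exp (-t) * (Real.cosh t)⁻¹) atTop (nhds (0 * 0)) :=
    (Real.tendsto_exp_atBot.comp tendsto_neg_atTop_atBot).mul tendsto_sech_atTop
  have h2 : Tendsto (fun t : ℝ => 1 - Real.exp (-t) * (Real.cosh t)⁻¹) atTop (nhds 1) := by
    simpa using (tendsto_const_nhds (x := (1:ℝ))).sub h
  exact h2.congr fun t => (key t).symm

/-- For orthogonal unit vectors `e, v`, the explicit meridian
`γ_v(t) = (-tanh t) • e + (cosh t)⁻¹ • v` is a solution of the height flow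
`γ' = -(e - ⟪e,γ⟫ • γ)` on the unit sphere running from the north pole `e`
to the south pole `-e`. -/
theorem meridian_trajectory {E : Type*}
    [NormedAddCommGroup E] [InnerProductSpace ℝ E]
    (e v : E) (he : ‖e‖ = 1) (hv : ‖v‖ = 1) (hev : ⟪e, v⟫ = 0)
    (γ : ℝ → E) (hγ : ∀ t : ℝ, γ t = (-Real.tanh t) • e + (Real.cosh t)⁻¹ • v) :
    (∀ t : ℝ, HasDerivAt γ (-(e - ⟪e, γ t⟫ • γ t)) t) ∧
      (∀ t : ℝ, ‖γ t‖ = 1) ∧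
      Tendsto γ atBot (nhds e) ∧ Tendsto γ atTop (nhds (-e)) := by
  have hee : ⟪e, e⟫ = 1 := by
    rw [real_inner_self_eq_norm_sq, he]; norm_num
  have hvv : ⟪v, v⟫ = 1 := by
    rw [real_inner_self_eq_norm_sq, hv]; norm_num
  have hve : ⟪v, e⟫ = 0 := by rw [real_inner_comm]; exact hev
  have hinner : ∀ t : ℝ, ⟪e, γ t⟫ = -Real.tanh t := by
    intro t
    rw [hγ t, inner_add_right, real_inner_smul_right, real_inner_smul_right, hee, hev]
    ring
  refine ⟨fun t => ?_, fun t => ?_, ?_, ?_⟩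
  · have hd : HasDerivAt (fun x => (-Real.tanh x) • e + (Real.cosh x)⁻¹ • v)
        ((-(Real.cosh t)⁻¹ ^ 2) • e + (-Real.sinh t / Real.cosh t ^ 2) • v) t :=
      (((hasDerivAt_tanh' t).neg).smul_const e).add ((hasDerivAt_sech t).smul_const v)
    have heq : (-(Real.cosh t)⁻¹ ^ 2) • e + (-Real.sinh t / Real.cosh t ^ 2) • v
        = -(e - ⟪e, γ t⟫ • γ t) := by
      rw [hinner t, hγ t]
      have hc := cosh_ne t
      have h2 := Real.cosh_sq_sub_sinh_sq t
      simp only [Real.tanh_eq_sinh_div_cosh]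
      match_scalars
      · field_simp
        nlinarith [h2]
      · field_simp
    rw [← heq]
    exact hd.congr_of_eventuallyEq (Eventually.of_forall fun x => hγ x)
  · have hsq : ‖γ t‖ ^ 2 = 1 := by
      rw [← real_inner_self_eq_norm_sq, hγ t]
      have hc := cosh_ne t
      have h2 := Real.cosh_sq_sub_sinh_sq t
      simp only [inner_add_add_self, real_inner_smul_left, real_inner_smul_right, hee, hvv,
        hev, hve, Real.tanh_eq_sinh_div_cosh]
      field_simp
      nlinarith [h2]
    nlinarith [norm_nonneg (γ t), hsq]
  · have hcomp : Tendsto (fun t : ℝ => γ (-t)) atTop (nhds e) := by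
      have h1 : Tendsto (fun t : ℝ => Real.tanh t • e + (Real.cosh t)⁻¹ • v) atTop
          (nhds ((1:ℝ) • e + (0:ℝ) • v)) :=
        (tendsto_tanh_atTop.smul_const e).add (tendsto_sech_atTop.smul_const v)
      have he' : ((1:ℝ)) • e + (0:ℝ) • v = e := by simp
      rw [he'] at h1
      refine h1.congr fun t => ?_
      rw [hγ (-t), Real.tanh_neg, Real.cosh_neg, neg_neg]
    have h := hcomp.comp tendsto_neg_atBot_atTop
    refine h.congr fun t => ?_
    simp [Function.comp]
  · have h1 : Tendsto (fun t : ℝ => (-Real.tanh t) • e + (Real.cosh t)⁻¹ • v) atTop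
        (nhds ((-(1:ℝ)) • e + (0:ℝ) • v)) :=
      ((tendsto_tanh_atTop.neg).smul_const e).add (tendsto_sech_atTop.smul_const v)
    have he' : (-(1:ℝ)) • e + (0:ℝ) • v = -e := by simp
    rw [he'] at h1
    exact h1.congr fun t => (hγ t).symm
end

section
/- Let E be a real inner product space, e ∈ E a unit vector, and γ : ℝ → E a differentiable curve satisfying γ'(t) = -(e - ⟨e,γ(t)⟩·γ(t)) for all t ∈ ℝ. Then the orthogonal component w(t) := γ(t) - ⟨e,γ(t)⟩·e is differentiable and satisfies w'(t) = ⟨e,γ(t)⟩·w(t) for all t ∈ ℝ; in particular w(t) is for every t a nonnegative scalar multiple of w(s) for every s ≤ t along which w does not vanish. -/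
open scoped RealInnerProductSpace

/-- Along any solution of the height flow `γ' = -(e - ⟪e,γ⟫ • γ)` with `‖e‖ = 1`, the
equatorial component `w(t) = γ(t) - ⟪e,γ(t)⟫ • e` satisfies the linear equation
`w' = ⟪e,γ⟫ • w`; in particular `w(t)` is a nonnegative scalar multiple of `w(s)` for every
`s ≤ t` with `w(s) ≠ 0`. -/
theorem equatorial_component_linear {E : Type*}
    [NormedAddCommGroup E] [InnerProductSpace ℝ E]
    (e : E) (he : ‖e‖ = 1) (γ : ℝ → E)
    (hγ : ∀ t : ℝ, HasDerivAt γ (-(e - ⟪e, γ t⟫ • γ t)) t)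
    (w : ℝ → E) (hw : ∀ t : ℝ, w t = γ t - ⟪e, γ t⟫ • e) :
    (∀ t : ℝ, HasDerivAt w (⟪e, γ t⟫ • w t) t) ∧
      (∀ s t : ℝ, s ≤ t → w s ≠ 0 → ∃ c : ℝ, 0 ≤ c ∧ w t = c • w s) := by
  have hwe : w = fun t => γ t - ⟪e, γ t⟫ • e := funext hw
  set a : ℝ → ℝ := fun t => ⟪e, γ t⟫ with ha
  have hee : ⟪e, e⟫ = (1 : ℝ) := by
    rw [real_inner_self_eq_norm_sq, he]; norm_num
  -- derivative of a
  have haderiv : ∀ t, HasDerivAt a (-(1 - a t ^ 2)) t := by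
    intro t
    have h := (hasDerivAt_const t e).inner ℝ (hγ t)
    simp only [inner_zero_left, add_zero] at h
    refine h.congr_deriv ?_
    rw [inner_neg_right, inner_sub_right, inner_smul_right, hee]
    ring
  have hwderiv : ∀ t : ℝ, HasDerivAt w (a t • w t) t := by
    intro t
    have h := (hγ t).sub ((haderiv t).smul_const e)
    rw [hwe]
    refine h.congr_deriv ?_
    simp only [ha]
    module
  refine ⟨hwderiv, fun s t _ _ => ?_⟩
  -- a is continuous, take an antiderivative A
  have hacont : Continuous a :=
    (Differentiable.continuous fun t => (haderiv t).differentiableAt)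
  set A : ℝ → ℝ := fun t => ∫ u in (0:ℝ)..t, a u with hA
  have hAderiv : ∀ t, HasDerivAt A (a t) t := fun t =>
    intervalIntegral.integral_hasDerivAt_right (hacont.intervalIntegrable _ _)
      (hacont.stronglyMeasurableAtFilter _ _) hacont.continuousAt
  set v : ℝ → E := fun t => Real.exp (-A t) • w t with hv
  have hvderiv : ∀ t, HasDerivAt v 0 t := by
    intro t
    have hexp : HasDerivAt (fun t => Real.exp (-A t)) (-a t * Real.exp (-A t)) t := by
      have := (Real.hasDerivAt_exp (-A t)).comp t ((hAderiv t).neg)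
      exact this.congr_deriv (by ring)
    have h := hexp.smul (hwderiv t)
    refine h.congr_deriv ?_
    simp only [smul_smul]
    module
  have hvconst : v t = v s := by
    exact is_const_of_deriv_eq_zero
      (fun x => (hvderiv x).differentiableAt) (fun x => (hvderiv x).deriv) t s
  refine ⟨Real.exp (A t - A s), (Real.exp_pos _).le, ?_⟩
  have : Real.exp (-A t) • w t = Real.exp (-A s) • w s := hvconst
  calc w t = Real.exp (A t) • (Real.exp (-A t) • w t) := by
        rw [smul_smul, ← Real.exp_add]; simp
    _ = Real.exp (A t) • (Real.exp (-A s) • w s) := by rw [this]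
    _ = Real.exp (A t - A s) • w s := by rw [smul_smul, ← Real.exp_add]; ring_nf
end

section
/- Let E be a real Hilbert space, e ∈ E a unit vector, and γ : ℝ → E a differentiable curve satisfying γ'(t) = -(e - ⟨e,γ(t)⟩·γ(t)) for all t ∈ ℝ, with ‖γ(0)‖ = 1 and γ(0) ≠ e and γ(0) ≠ -e. Then there exist a unit vector v ∈ E with ⟨e,v⟩ = 0 and a real number σ such that γ(t) = (-tanh(t+σ))·e + (cosh(t+σ))⁻¹·v for all t ∈ ℝ. -/
open scoped RealInnerProductSpace

/-- Every nonconstant solution of the height flow `γ' = -(e - ⟪e,γ⟫ • γ)` on the unit sphere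
is, up to a time shift `σ`, the explicit meridian through an equatorial unit vector `v`. -/
theorem heightFlow_classification {E : Type*}
    [NormedAddCommGroup E] [InnerProductSpace ℝ E] [CompleteSpace E]
    (e : E) (he : ‖e‖ = 1) (γ : ℝ → E)
    (hγ : ∀ t : ℝ, HasDerivAt γ (-(e - ⟪e, γ t⟫ • γ t)) t)
    (h0 : ‖γ 0‖ = 1) (hne : γ 0 ≠ e) (hne' : γ 0 ≠ -e) :
    ∃ v : E, ‖v‖ = 1 ∧ ⟪e, v⟫ = 0 ∧
      ∃ σ : ℝ, ∀ t : ℝ,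
        γ t = (-Real.tanh (t + σ)) • e + (Real.cosh (t + σ))⁻¹ • v := by
  have hee : ⟪e, e⟫ = 1 := by
    rw [real_inner_self_eq_norm_sq, he]; norm_num
  set a : ℝ → ℝ := fun t => ⟪e, γ t⟫ with ha_def
  -- the height satisfies a' = a² - 1
  have ha' : ∀ t, HasDerivAt a (a t ^ 2 - 1) t := by
    intro t
    have h := (hasDerivAt_const t e).inner ℝ (hγ t)
    convert h using 1
    · rfl
    · rfl
    simp only [inner_neg_right, inner_sub_right, real_inner_smul_right, hee,
      inner_zero_left, add_zero, ha_def]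
    ring
  -- the initial height is strictly between -1 and 1
  have hCS : |a 0| ≤ 1 := by
    have := abs_real_inner_le_norm e (γ 0)
    rwa [he, h0, one_mul] at this
  have ha0 : |a 0| < 1 := by
    rcases hCS.lt_or_eq with h | h
    · exact h
    rcases (abs_eq zero_le_one).1 h with h1 | h1
    · exact absurd ((inner_eq_one_iff_of_norm_eq_one he h0).1 h1).symm hne
    · have h2 : ⟪e, -γ 0⟫ = 1 := by
        rw [inner_neg_right]
        simp only [ha_def] at h1
        rw [h1]; ring
      have h3 := (inner_eq_one_iff_of_norm_eq_one he (by rw [norm_neg]; exact h0)).1 h2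
      exact absurd (by rw [h3, neg_neg]) hne'
  -- choose the time shift
  set s : ℝ := Real.sqrt (1 - a 0 ^ 2) with hs_def
  have h1a : (0:ℝ) < 1 - a 0 ^ 2 := by nlinarith [abs_lt.1 ha0]
  have hs_pos : 0 < s := Real.sqrt_pos.2 h1a
  have hs_sq : s ^ 2 = 1 - a 0 ^ 2 := Real.sq_sqrt h1a.le
  set σ : ℝ := Real.arsinh (-(a 0) / s) with hσ_def
  have hsinhσ : Real.sinh σ = -(a 0) / s := Real.sinh_arsinh _
  have hcoshσ : Real.cosh σ = 1 / s := by
    rw [hσ_def, Real.cosh_arsinh,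
      show 1 + (-(a 0) / s) ^ 2 = (1 / s) ^ 2 by field_simp; nlinarith [hs_sq],
      Real.sqrt_sq (by positivity)]
  -- continuity and the accumulated height (integral of a)
  have hγC : Continuous γ := continuous_iff_continuousAt.2 fun t => (hγ t).continuousAt
  have haC : Continuous a := continuous_const.inner hγC
  set A : ℝ → ℝ := fun t => ∫ u in (0:ℝ)..t, a u with hA_def
  have hA : ∀ t, HasDerivAt A (a t) t := fun t =>
    intervalIntegral.integral_hasDerivAt_right (haC.intervalIntegrable 0 t)
      (haC.stronglyMeasurableAtFilter _ _) haC.continuousAt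
  have hA0 : A 0 = 0 := intervalIntegral.integral_same
  -- the combination f := a·cosh + sinh satisfies the linear ODE f' = a f and f 0 = 0
  set f : ℝ → ℝ := fun t => a t * Real.cosh (t + σ) + Real.sinh (t + σ) with hf_def
  have hadd : ∀ t : ℝ, HasDerivAt (fun t : ℝ => t + σ) 1 t := fun t =>
    (hasDerivAt_id t).add_const σ
  have hcosh : ∀ t : ℝ, HasDerivAt (fun t => Real.cosh (t + σ)) (Real.sinh (t + σ)) t := by
    intro t
    simpa [Function.comp_def] using (Real.hasDerivAt_cosh (t + σ)).comp t (hadd t)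
  have hsinh : ∀ t : ℝ, HasDerivAt (fun t => Real.sinh (t + σ)) (Real.cosh (t + σ)) t := by
    intro t
    simpa [Function.comp_def] using (Real.hasDerivAt_sinh (t + σ)).comp t (hadd t)
  have hf' : ∀ t, HasDerivAt f (a t * f t) t := by
    intro t
    have h := ((ha' t).mul (hcosh t)).add (hsinh t)
    convert h using 1
    · rfl
    · rfl
    · rfl
    simp only [hf_def]
    ring
  have hf0 : f 0 = 0 := by
    simp only [hf_def, zero_add, hsinhσ, hcoshσ]
    field_simp
    ring
  -- integrating factor: exp(-A)·f is constant, hence f ≡ 0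
  have hfzero : ∀ t, f t = 0 := by
    have hg' : ∀ t, HasDerivAt (fun t => Real.exp (-A t) * f t) 0 t := by
      intro t
      have hE : HasDerivAt (fun t => Real.exp (-A t)) (-(a t) * Real.exp (-A t)) t := by
        have := (Real.hasDerivAt_exp (-A t)).comp t (hA t).neg
        simpa [mul_comm, Function.comp_def] using this
      have h := hE.mul (hf' t)
      convert h using 1
      · rfl
      · rfl
      · rfl
      ring
    intro t
    have hconst := is_const_of_deriv_eq_zero (𝕜 := ℝ)
      (fun x => (hg' x).differentiableAt) (fun x => (hg' x).deriv) t 0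
    simp only [hA0, hf0, mul_zero] at hconst
    exact (mul_eq_zero.1 hconst).resolve_left (Real.exp_ne_zero _)
  -- hence the height is the explicit tanh profile
  have hat : ∀ t, a t = -Real.tanh (t + σ) := by
    intro t
    have hft := hfzero t
    simp only [hf_def] at hft
    have hc := (Real.cosh_pos (t + σ)).ne'
    rw [Real.tanh_eq_sinh_div_cosh]
    field_simp
    linarith
  -- the equatorial part w satisfies w' = a w
  set w : ℝ → E := fun t => γ t - a t • e with hw_def
  have hw' : ∀ t, HasDerivAt w (a t • w t) t := by
    intro t
    have h := (hγ t).sub ((ha' t).smul_const e)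
    convert h using 1
    · rfl
    simp only [hw_def]
    match_scalars <;> ring
  -- cosh·w is constant
  have hφ' : ∀ t, HasDerivAt (fun t => Real.cosh (t + σ) • w t) 0 t := by
    intro t
    have h := (hcosh t).smul (hw' t)
    convert h using 1
    · rfl
    rw [smul_smul, hat t,
      show Real.cosh (t + σ) * -Real.tanh (t + σ) = -Real.sinh (t + σ) by
        rw [Real.tanh_eq_sinh_div_cosh]
        field_simp]
    rw [← add_smul]
    simp
  have hφconst : ∀ t, Real.cosh (t + σ) • w t = Real.cosh σ • w 0 := by
    intro t
    have h := is_const_of_deriv_eq_zero (𝕜 := ℝ)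
      (fun x => (hφ' x).differentiableAt) (fun x => (hφ' x).deriv) t 0
    simpa using h
  -- the equatorial direction
  refine ⟨Real.cosh σ • w 0, ?_, ?_, σ, ?_⟩
  · have hew0 : ⟪e, w 0⟫ = 0 := by
      simp only [hw_def, inner_sub_right, real_inner_smul_right, hee, mul_one, ha_def]
      ring
    have hw0sq : ‖w 0‖ ^ 2 = 1 - a 0 ^ 2 := by
      have hdecomp : γ 0 = w 0 + a 0 • e := by simp [hw_def]
      have hexp := norm_add_sq_real (w 0) (a 0 • e)
      rw [← hdecomp, h0] at hexp
      have h1 : ⟪w 0, a 0 • e⟫ = 0 := by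
        rw [real_inner_smul_right, real_inner_comm, hew0, mul_zero]
      have h2 : ‖a 0 • e‖ ^ 2 = a 0 ^ 2 := by
        rw [norm_smul, Real.norm_eq_abs, he, mul_one, sq_abs]
      rw [h1, h2] at hexp
      linarith
    have hw0 : ‖w 0‖ = s := by
      nlinarith [norm_nonneg (w 0), hs_sq]
    rw [norm_smul, Real.norm_eq_abs, abs_of_pos (Real.cosh_pos σ), hcoshσ, hw0]
    field_simp
  · rw [real_inner_smul_right]
    have : ⟪e, w 0⟫ = 0 := by
      simp only [hw_def, inner_sub_right, real_inner_smul_right, hee, mul_one, ha_def]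
      ring
    rw [this, mul_zero]
  · intro t
    have hwt : w t = (Real.cosh (t + σ))⁻¹ • (Real.cosh σ • w 0) := by
      rw [← hφconst t, inv_smul_smul₀ (Real.cosh_pos (t + σ)).ne']
    have : γ t = w t + a t • e := by simp [hw_def]
    rw [this, hwt, hat t, add_comm]
end

section
/- Let E be a real Hilbert space, e ∈ E a unit vector, and γ : ℝ → E a differentiable curve satisfying γ'(t) = -(e - ⟨e,γ(t)⟩·γ(t)) for all t ∈ ℝ, with ‖γ(0)‖ = 1 and γ(0) ≠ e and γ(0) ≠ -e. Then there exists exactly one t₀ ∈ ℝ such that ⟨e, γ(t₀)⟩ = 0. -/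
open scoped RealInnerProductSpace

/-- Every nonconstant solution of the height flow `γ' = -(e - ⟪e,γ⟫ • γ)` on the unit sphere
crosses the equator `{p : ‖p‖ = 1, ⟪e,p⟫ = 0}` at exactly one time. -/
theorem heightFlow_unique_equator_crossing {E : Type*}
    [NormedAddCommGroup E] [InnerProductSpace ℝ E] [CompleteSpace E]
    (e : E) (he : ‖e‖ = 1) (γ : ℝ → E)
    (hγ : ∀ t : ℝ, HasDerivAt γ (-(e - ⟪e, γ t⟫ • γ t)) t)
    (h0 : ‖γ 0‖ = 1) (hne : γ 0 ≠ e) (hne' : γ 0 ≠ -e) :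
    ∃! t₀ : ℝ, ⟪e, γ t₀⟫ = 0 := by
  set h : ℝ → ℝ := fun t => ⟪e, γ t⟫ with hh
  -- derivative of the height function
  have hd : ∀ t, HasDerivAt h (h t ^ 2 - 1) t := by
    intro t
    have h1 := (innerSL ℝ e).hasFDerivAt.comp_hasDerivAt t (hγ t)
    have h2 : (innerSL ℝ e) (-(e - ⟪e, γ t⟫ • γ t)) = h t ^ 2 - 1 := by
      simp only [innerSL_apply_apply, inner_neg_right, inner_sub_right, inner_smul_right,
        real_inner_self_eq_norm_sq, he]
      ring_nf
      rfl
    rw [h2] at h1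
    exact h1
  have hdiff : Differentiable ℝ h := fun t => (hd t).differentiableAt
  have hcont : Continuous h := hdiff.continuous
  -- |h 0| < 1
  have habs : |h 0| < 1 := by
    rcases lt_or_eq_of_le (abs_real_inner_le_norm e (γ 0)) with hlt | heq
    · simpa [he, h0] using hlt
    · exfalso
      rw [he, h0, mul_one] at heq
      rcases abs_eq (by norm_num : (0:ℝ) ≤ 1) |>.mp heq with h1 | h1
      · exact hne ((inner_eq_one_iff_of_norm_eq_one he h0).mp h1).symm
      · have : ⟪e, -(γ 0)⟫ = 1 := by rw [inner_neg_right, h1]; ring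
        have h3 := (inner_eq_one_iff_of_norm_eq_one he (by simp [h0])).mp this
        exact hne' (by rw [h3, neg_neg])
  obtain ⟨hlow, hup⟩ := abs_lt.mp habs
  -- primitives
  have hint : ∀ f : ℝ → ℝ, Continuous f →
      ∀ t, HasDerivAt (fun u => ∫ s in (0:ℝ)..u, f s) (f t) t := by
    intro f hf t
    exact intervalIntegral.integral_hasDerivAt_right (hf.intervalIntegrable 0 t)
      (hf.stronglyMeasurableAtFilter _ _) hf.continuousAt
  -- 1 - h t > 0 for all t
  have hup' : ∀ t, h t < 1 := by
    intro t
    set H : ℝ → ℝ := fun u => ∫ s in (0:ℝ)..u, (1 + h s) with hH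
    have hHd : ∀ u, HasDerivAt H (1 + h u) u := hint _ (by continuity)
    set F : ℝ → ℝ := fun u => (1 - h u) * Real.exp (-(H u)) with hF
    have hFd : ∀ u, HasDerivAt F 0 u := by
      intro u
      have d1 : HasDerivAt (fun v => 1 - h v) (-(h u ^ 2 - 1)) u := (hd u).const_sub 1
      have d2 : HasDerivAt (fun v => Real.exp (-(H v))) (Real.exp (-(H u)) * (-(1 + h u))) u :=
        ((hHd u).neg).exp
      have := d1.mul d2
      rw [hF]
      convert this using 1
      · rfl
      · rfl
      · rfl
      · ring
    have hFconst : ∀ u, F u = F 0 :=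
      fun u => is_const_of_deriv_eq_zero (fun v => (hFd v).differentiableAt)
        (fun v => (hFd v).deriv) u 0
    have hF0 : F 0 > 0 := by
      have h2 : (0:ℝ) < 1 - h 0 := by linarith
      exact mul_pos h2 (Real.exp_pos _)
    have hFt0 : F t > 0 := by rw [hFconst t]; exact hF0
    have hFt : (1 - h t) * Real.exp (-(H t)) > 0 := hFt0
    have hexp : (0:ℝ) < Real.exp (-(H t)) := Real.exp_pos _
    nlinarith [hFt, hexp]
  -- -1 < h t for all t
  have hlow' : ∀ t, -1 < h t := by
    intro t
    set H : ℝ → ℝ := fun u => ∫ s in (0:ℝ)..u, (1 - h s) with hH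
    have hHd : ∀ u, HasDerivAt H (1 - h u) u := hint _ (by continuity)
    set F : ℝ → ℝ := fun u => (1 + h u) * Real.exp (H u) with hF
    have hFd : ∀ u, HasDerivAt F 0 u := by
      intro u
      have d1 : HasDerivAt (fun v => 1 + h v) (h u ^ 2 - 1) u := (hd u).const_add 1
      have d2 : HasDerivAt (fun v => Real.exp (H v)) (Real.exp (H u) * (1 - h u)) u :=
        (hHd u).exp
      have := d1.mul d2
      rw [hF]
      convert this using 1
      · rfl
      · rfl
      · rfl
      · ring
    have hFconst : ∀ u, F u = F 0 :=
      fun u => is_const_of_deriv_eq_zero (fun v => (hFd v).differentiableAt)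
        (fun v => (hFd v).deriv) u 0
    have hF0 : F 0 > 0 := by
      have h2 : (0:ℝ) < 1 + h 0 := by linarith
      exact mul_pos h2 (Real.exp_pos _)
    have hFt0 : F t > 0 := by rw [hFconst t]; exact hF0
    have hFt : (1 + h t) * Real.exp (H t) > 0 := hFt0
    have hexp : (0:ℝ) < Real.exp (H t) := Real.exp_pos _
    nlinarith [hFt, hexp]
  -- h is strictly decreasing
  have hanti : StrictAnti h := by
    apply strictAnti_of_deriv_neg
    intro t
    rw [(hd t).deriv]
    nlinarith [hup' t, hlow' t]
  set δ : ℝ := 1 - h 0 ^ 2 with hδ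
  have hδpos : 0 < δ := by nlinarith [hup' 0, hlow' 0]
  have hδT : δ * (2 / δ) = 2 := by
    rw [mul_comm]; exact div_mul_cancel₀ 2 hδpos.ne'
  set φ : ℝ → ℝ := fun t => h t + δ * t with hφ
  have hφc : Continuous φ := by
    rw [hφ]; exact hcont.add (continuous_const.mul continuous_id)
  have hφdiff : Differentiable ℝ φ := by
    rw [hφ]
    exact hdiff.add ((differentiable_id.const_mul δ))
  have hφd : ∀ x, HasDerivAt φ ((h x ^ 2 - 1) + δ) x := by
    intro x
    have hlin : HasDerivAt (fun v : ℝ => δ * v) δ x := by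
      simpa using (hasDerivAt_id x).const_mul δ
    rw [hφ]
    exact (hd x).add hlin
  -- existence of t₁ ≥ 0 with h t₁ ≤ 0
  have hex1 : ∃ t₁, 0 ≤ t₁ ∧ h t₁ ≤ 0 := by
    by_contra hcon
    push_neg at hcon
    have hpos : ∀ t, 0 ≤ t → 0 < h t := fun t ht => hcon t ht
    have h0pos : 0 < h 0 := hpos 0 le_rfl
    have hφanti : AntitoneOn φ (Set.Ici 0) := by
      apply antitoneOn_of_deriv_nonpos (convex_Ici 0) hφc.continuousOn
        hφdiff.differentiableOn
      intro x hx
      rw [interior_Ici] at hx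
      rw [(hφd x).deriv]
      have h1 : 0 < h x := hpos x (le_of_lt hx)
      have h2 : h x ≤ h 0 := (hanti.antitone) (le_of_lt hx)
      nlinarith
    have hTpos : (0:ℝ) < 2 / δ := by positivity
    have key := hφanti (Set.mem_Ici.mpr le_rfl) (Set.mem_Ici.mpr hTpos.le) hTpos.le
    simp only [hφ, mul_zero, add_zero] at key
    -- key : h (2/δ) + δ * (2/δ) ≤ h 0
    have := hpos (2 / δ) hTpos.le
    have := hup' 0
    linarith [hδT ▸ key, this]
  -- existence of t₂ ≤ 0 with h t₂ ≥ 0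
  have hex2 : ∃ t₂, t₂ ≤ 0 ∧ 0 ≤ h t₂ := by
    by_contra hcon
    push_neg at hcon
    have hneg : ∀ t, t ≤ 0 → h t < 0 := fun t ht => hcon t ht
    have h0neg : h 0 < 0 := hneg 0 le_rfl
    have hφanti : AntitoneOn φ (Set.Iic 0) := by
      apply antitoneOn_of_deriv_nonpos (convex_Iic 0) hφc.continuousOn
        hφdiff.differentiableOn
      intro x hx
      rw [interior_Iic] at hx
      rw [(hφd x).deriv]
      have h1 : h x < 0 := hneg x (le_of_lt hx)
      have h2 : h 0 ≤ h x := (hanti.antitone) (le_of_lt hx)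
      nlinarith
    have hTpos : (0:ℝ) < 2 / δ := by positivity
    have hTneg : -(2 / δ) < 0 := by linarith
    have key := hφanti (Set.mem_Iic.mpr hTneg.le) (Set.mem_Iic.mpr le_rfl) hTneg.le
    simp only [hφ, mul_zero, add_zero, mul_neg] at key
    -- key : h 0 ≤ h (-(2/δ)) + -(δ * (2/δ))
    have := hneg (-(2 / δ)) hTneg.le
    have := hlow' 0
    linarith [hδT ▸ key, this]
  obtain ⟨t₁, ht₁0, ht₁⟩ := hex1
  obtain ⟨t₂, ht₂0, ht₂⟩ := hex2
  have hle : t₂ ≤ t₁ := le_trans ht₂0 ht₁0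
  have hmem : (0:ℝ) ∈ Set.Icc (h t₁) (h t₂) := ⟨ht₁, ht₂⟩
  obtain ⟨t₀, _, ht₀⟩ := intermediate_value_Icc' hle hcont.continuousOn hmem
  refine ⟨t₀, ht₀, ?_⟩
  intro t ht
  have hht : h t = h t₀ := by
    rw [ht₀]; exact ht
  exact hanti.injective hht
end
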